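/- For the Magnus representation β of the free group Fₙ, every element w of the k-th term of the lower central series (Fₙ)_k satisfies β(w) − 1 ∈ Δᵏ. -/

import Mathlib

/-- The relation identifying the squares of the generators with `0`. -/
def MagnusRel (n : ℕ) : FreeAlgebra ℤ (Fin n) → FreeAlgebra ℤ (Fin n) → Prop :=
  fun a b => ∃ j : Fin n, a = FreeAlgebra.ι ℤ j * FreeAlgebra.ι ℤ j ∧ b = 0

/-- The ring `P = ℤ⟨x₁,…,xₙ⟩ / (x₁², …, xₙ²)`.  (Since `xⱼ² = 0`, the Magnus
representation `aⱼ ↦ 1 + xⱼ` takes values in this quotient; it is the image of the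
corresponding power series ring `ℤ⟨⟨x₁,…,xₙ⟩⟩/(xⱼ²)` relevant to the statements below.) -/
abbrev MagnusRing (n : ℕ) := RingQuot (MagnusRel n)

/-- The indeterminate `xⱼ` in `MagnusRing n`. -/
noncomputable def magnusX {n : ℕ} (j : Fin n) : MagnusRing n :=
  RingQuot.mkRingHom (MagnusRel n) (FreeAlgebra.ι ℤ j)

/-- The augmentation `ρ : P → ℤ` sending each `xⱼ` to `0`. -/
noncomputable def magnusAug (n : ℕ) : MagnusRing n →+* ℤ :=
  RingQuot.lift ⟨((FreeAlgebra.lift ℤ (fun _ : Fin n => (0 : ℤ))) : _).toRingHom, by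
    rintro a b ⟨j, rfl, rfl⟩
    simp⟩

/-- The fundamental ideal `Δ = ker ρ`, viewed as a `ℤ`-submodule of `P` (so that its
powers `Δᵏ` are the usual powers of the two-sided ideal `Δ`). -/
noncomputable def magnusDelta (n : ℕ) : Submodule ℤ (MagnusRing n) :=
  (RingHom.ker (magnusAug n)).restrictScalars ℤ

lemma magnusDelta_mem {n : ℕ} {x : MagnusRing n} :
    x ∈ magnusDelta n ↔ magnusAug n x = 0 := Iff.rfl

lemma magnusAug_X {n : ℕ} (j : Fin n) : magnusAug n (magnusX j) = 0 := by
  rw [magnusAug, magnusX, RingQuot.lift_mkRingHom_apply]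
  simp

lemma magnusDelta_mul_left {n : ℕ} (m : ℕ) (r x : MagnusRing n)
    (hx : x ∈ magnusDelta n ^ (m + 1)) : r * x ∈ magnusDelta n ^ (m + 1) := by
  induction m generalizing x with
  | zero =>
    rw [zero_add, Submodule.pow_one] at *
    rw [magnusDelta_mem] at *
    simp [hx]
  | succ m ih =>
    rw [Submodule.pow_succ' (magnusDelta n) (n := m + 1) m.succ_ne_zero] at hx ⊢
    refine Submodule.mul_induction_on hx (fun a ha b hb => ?_) (fun a b ha hb => ?_)
    · rw [← mul_assoc]
      exact Submodule.mul_mem_mul (by rw [magnusDelta_mem] at *; simp [ha]) hb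
    · rw [mul_add]; exact add_mem ha hb

lemma magnusDelta_mul_right {n : ℕ} (m : ℕ) (r x : MagnusRing n)
    (hx : x ∈ magnusDelta n ^ (m + 1)) : x * r ∈ magnusDelta n ^ (m + 1) := by
  induction m generalizing x with
  | zero =>
    rw [zero_add, Submodule.pow_one] at *
    rw [magnusDelta_mem] at *
    simp [hx]
  | succ m ih =>
    rw [Submodule.pow_succ] at hx ⊢
    refine Submodule.mul_induction_on hx (fun a ha b hb => ?_) (fun a b ha hb => ?_)
    · rw [mul_assoc]
      exact Submodule.mul_mem_mul ha (by rw [magnusDelta_mem] at *; simp [hb])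
    · rw [add_mul]; exact add_mem ha hb

lemma magnusAug_beta {n : ℕ} (β : FreeGroup (Fin n) →* (MagnusRing n)ˣ)
    (hβ : ∀ j : Fin n,
      ((β (FreeGroup.of j) : (MagnusRing n)ˣ) : MagnusRing n) = 1 + magnusX j)
    (w : FreeGroup (Fin n)) :
    magnusAug n ((β w : (MagnusRing n)ˣ) : MagnusRing n) = 1 := by
  induction w using FreeGroup.induction_on with
  | C1 => simp
  | of j =>
    show magnusAug n ((β (FreeGroup.of j) : (MagnusRing n)ˣ) : MagnusRing n) = 1
    rw [hβ j]; simp [magnusAug_X]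
  | inv_of j ih =>
    show magnusAug n ((β (FreeGroup.of j)⁻¹ : (MagnusRing n)ˣ) : MagnusRing n) = 1
    replace ih : magnusAug n ((β (FreeGroup.of j) : (MagnusRing n)ˣ) : MagnusRing n) = 1 := ih
    have h : ((β (FreeGroup.of j)⁻¹ : (MagnusRing n)ˣ) : MagnusRing n) *
        ((β (FreeGroup.of j) : (MagnusRing n)ˣ) : MagnusRing n) = 1 := by
      rw [← Units.val_mul, ← map_mul]; simp
    have := congrArg (magnusAug n) h
    rw [map_mul, ih, map_one, mul_one] at this
    exact this
  | mul u v hu hv => rw [map_mul, Units.val_mul, map_mul, hu, hv, one_mul]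

lemma magnusDelta_beta {n : ℕ} (β : FreeGroup (Fin n) →* (MagnusRing n)ˣ)
    (hβ : ∀ j : Fin n,
      ((β (FreeGroup.of j) : (MagnusRing n)ˣ) : MagnusRing n) = 1 + magnusX j)
    (w : FreeGroup (Fin n)) :
    ((β w : (MagnusRing n)ˣ) : MagnusRing n) - 1 ∈ magnusDelta n := by
  rw [magnusDelta_mem, map_sub, magnusAug_beta β hβ w, map_one, sub_self]

/-- For the Magnus representation `β`, every element `w` of the `k`-th term of the lower
central series `(Fₙ)_k` satisfies `β(w) − 1 ∈ Δᵏ`.  (Here `lowerCentralSeries F k` is the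
paper's `(Fₙ)_{k+1}`, since the paper indexes the lower central series from `1`.) -/
theorem magnus_lowerCentralSeries_mem {n : ℕ} (β : FreeGroup (Fin n) →* (MagnusRing n)ˣ)
    (hβ : ∀ j : Fin n,
      ((β (FreeGroup.of j) : (MagnusRing n)ˣ) : MagnusRing n) = 1 + magnusX j)
    (k : ℕ) (w : FreeGroup (Fin n)) (hw : w ∈ Subgroup.lowerCentralSeries (⊤ : Subgroup (FreeGroup (Fin n))) k) :
    ((β w : (MagnusRing n)ˣ) : MagnusRing n) - 1 ∈ magnusDelta n ^ (k + 1) := by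
  induction k generalizing w with
  | zero => rw [zero_add, Submodule.pow_one]; exact magnusDelta_beta β hβ w
  | succ k ih =>
    rw [Subgroup.lowerCentralSeries_succ] at hw
    refine Subgroup.closure_induction (p := fun g _ =>
        ((β g : (MagnusRing n)ˣ) : MagnusRing n) - 1 ∈ magnusDelta n ^ (k + 1 + 1))
      ?_ ?_ ?_ ?_ hw
    · rintro x ⟨p, hp, q, -, rfl⟩
      have hU := ih p hp
      have hV := magnusDelta_beta β hβ q
      set U : MagnusRing n := ((β p : (MagnusRing n)ˣ) : MagnusRing n) with hUdef
      set V : MagnusRing n := ((β q : (MagnusRing n)ˣ) : MagnusRing n) with hVdef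
      set U' : MagnusRing n := ((β p⁻¹ : (MagnusRing n)ˣ) : MagnusRing n) with hU'def
      set V' : MagnusRing n := ((β q⁻¹ : (MagnusRing n)ˣ) : MagnusRing n) with hV'def
      have hUU' : U * U' = 1 := by
        rw [hUdef, hU'def, ← Units.val_mul, ← map_mul]; simp
      have hVV' : V * V' = 1 := by
        rw [hVdef, hV'def, ← Units.val_mul, ← map_mul]; simp
      have hval : ((β (p * q * p⁻¹ * q⁻¹) : (MagnusRing n)ˣ) : MagnusRing n)
          = U * V * U' * V' := by
        simp only [map_mul, Units.val_mul, hUdef, hVdef, hU'def, hV'def]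
      have key : U * V - V * U ∈ magnusDelta n ^ (k + 1 + 1) := by
        have h1 : (U - 1) * (V - 1) ∈ magnusDelta n ^ (k + 1 + 1) := by
          rw [Submodule.pow_succ]
          exact Submodule.mul_mem_mul hU hV
        have h2 : (V - 1) * (U - 1) ∈ magnusDelta n ^ (k + 1 + 1) := by
          rw [Submodule.pow_succ' (magnusDelta n) (n := k + 1) k.succ_ne_zero]
          exact Submodule.mul_mem_mul hV hU
        have : U * V - V * U = (U - 1) * (V - 1) - (V - 1) * (U - 1) := by simp only [sub_mul, mul_sub, mul_one, one_mul, mul_assoc]; abel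
        rw [this]
        exact sub_mem h1 h2
      have heq : U * V * U' * V' - 1 = (U * V - V * U) * U' * V' := by
        have : (U * V - V * U) * U' * V' = U * V * U' * V' - V * (U * U') * V' := by simp only [sub_mul, mul_assoc]
        rw [this, hUU', mul_one, hVV']
      rw [commutatorElement_def, hval, heq]
      exact magnusDelta_mul_right _ _ _ (magnusDelta_mul_right _ _ _ key)
    · simp
    · intro x y _ _ hx hy
      set X : MagnusRing n := ((β x : (MagnusRing n)ˣ) : MagnusRing n)
      set Y : MagnusRing n := ((β y : (MagnusRing n)ˣ) : MagnusRing n)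
      have hval : ((β (x * y) : (MagnusRing n)ˣ) : MagnusRing n) = X * Y := by
        simp [map_mul, Units.val_mul]; rfl
      have : X * Y - 1 = (X - 1) * (Y - 1) + (X - 1) + (Y - 1) := by simp only [sub_mul, mul_sub, mul_one, one_mul, mul_assoc]; abel
      rw [hval, this]
      exact add_mem (add_mem (magnusDelta_mul_right _ _ _ hx) hx) hy
    · intro x _ hx
      set X : MagnusRing n := ((β x : (MagnusRing n)ˣ) : MagnusRing n)
      set X' : MagnusRing n := ((β x⁻¹ : (MagnusRing n)ˣ) : MagnusRing n)
      have hXX' : X' * X = 1 := by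
        rw [← Units.val_mul, ← map_mul]; simp
      have : X' - 1 = -(X' * (X - 1)) := by
        rw [mul_sub, hXX', mul_one, neg_sub]
      rw [this]
      exact neg_mem (magnusDelta_mul_left _ _ _ hx)
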